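/- Let h < 0 and n ≥ 1, and consider the splitting model on Z^d (d ≥ 1) with any valid splitting order; assume the model stabilizes (which holds since h < 1/2), so T is finite and contains the origin. Let x₀ ∈ T be a site that has a nearest neighbor outside T. Then there is a nearest-neighbor path x₀ ∼ x₁ ∼ x₂ ∼ ⋯ ∼ x_m = 0 with all x_k ∈ T such that u(x_{k+1}) > u(x_k) − (2d/(2d−1))·h for all k = 0, …, m−1 (note −h > 0, so u strictly increases along the path). -/

import Mathlib

open scoped BigOperators

/-- The nearest neighbor of `x ∈ ℤ^d` obtained by shifting coordinate `i` by `ε`. -/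
def nbr {d : ℕ} (x : Fin d → ℤ) (i : Fin d) (ε : ℤ) : Fin d → ℤ :=
  Function.update x i (x i + ε)

/-- Nearest-neighbor adjacency in `ℤ^d`. -/
def Adj {d : ℕ} (x y : Fin d → ℤ) : Prop :=
  (∑ i, |x i - y i|) = 1

lemma nbr_apply {d : ℕ} (x : Fin d → ℤ) (i : Fin d) (ε : ℤ) (j : Fin d) :
    nbr x i ε j = if j = i then x i + ε else x j := by
  simp [nbr, Function.update_apply]

lemma nbr_eq_add {d : ℕ} (x : Fin d → ℤ) (i : Fin d) (ε : ℤ) :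
    nbr x i ε = x + Pi.single i ε := by
  funext j
  by_cases hj : j = i
  · subst hj; simp [nbr_apply]
  · simp [nbr_apply, hj, Pi.single_apply]

lemma adj_nbr {d : ℕ} (x : Fin d → ℤ) (i : Fin d) (ε : ℤ) (hε : ε = 1 ∨ ε = -1) :
    Adj x (nbr x i ε) := by
  unfold Adj
  rw [Finset.sum_eq_single i]
  · rcases hε with h | h <;> simp [nbr_apply, h]
  · intro j _ hj; simp [nbr_apply, hj]
  · simp

lemma adj_symm {d : ℕ} {x y : Fin d → ℤ} (hxy : Adj x y) : Adj y x := by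
  unfold Adj at *
  rw [← hxy]
  exact Finset.sum_congr rfl fun i _ => abs_sub_comm _ _

lemma adj_iff_nbr {d : ℕ} {x y : Fin d → ℤ} (hxy : Adj x y) :
    ∃ i ε, (ε = 1 ∨ ε = -1) ∧ y = nbr x i ε := by
  unfold Adj at hxy
  have hne : ∃ i, x i ≠ y i := by
    by_contra hc
    push_neg at hc
    simp [hc] at hxy
  obtain ⟨i, hi⟩ := hne
  have h1 : 0 < |x i - y i| := abs_pos.mpr (sub_ne_zero.mpr hi)
  have hsplit : |x i - y i| + ∑ j ∈ Finset.univ.erase i, |x j - y j| = 1 := by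
    rw [Finset.add_sum_erase Finset.univ (fun j => |x j - y j|) (Finset.mem_univ i), hxy]
  have hrestnn : 0 ≤ ∑ j ∈ Finset.univ.erase i, |x j - y j| :=
    Finset.sum_nonneg fun j _ => abs_nonneg _
  have hrest : ∑ j ∈ Finset.univ.erase i, |x j - y j| = 0 := by omega
  have hzero : ∀ j ∈ Finset.univ.erase i, |x j - y j| = 0 := by
    intro j hj
    have hnn : ∀ j ∈ Finset.univ.erase i, 0 ≤ |x j - y j| := fun j _ => abs_nonneg _
    exact (Finset.sum_eq_zero_iff_of_nonneg hnn).mp hrest j hj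
  have habs : |x i - y i| = 1 := by omega
  refine ⟨i, y i - x i, ?_, ?_⟩
  · rcases abs_eq (by norm_num : (0:ℤ) ≤ 1) |>.mp habs with h | h
    · right; omega
    · left; omega
  · funext j
    by_cases hj : j = i
    · subst hj; simp [nbr_apply]
    · have h0 := hzero j (Finset.mem_erase.mpr ⟨hj, Finset.mem_univ j⟩)
      have : x j = y j := by
        have := abs_eq_zero.mp h0; omega
      simp [nbr_apply, hj, this]


/-- The splitting model on `ℤ^d` with initial mass `n` at the origin and background
mass `h` at every other site, together with a splitting order: `S (t+1)` is the set
of sites that split at time `t+1` (a subset of the sites unstable at time `t`,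
i.e. those of mass `≥ 1`), and the mass `η` evolves by Zhang's toppling rule:
a splitting site loses all its mass, distributing a fraction `1/(2d)` of it to
each of its `2d` nearest neighbors. -/
structure SplittingModel (d : ℕ) (n h : ℝ) where
  η : ℕ → (Fin d → ℤ) → ℝ
  S : ℕ → Set (Fin d → ℤ)
  init_origin : η 0 0 = n
  init_other : ∀ x : Fin d → ℤ, x ≠ 0 → η 0 x = h
  S_zero : S 0 = ∅
  S_subset : ∀ t, S (t + 1) ⊆ {x | 1 ≤ η t x}
  evolve : ∀ t x, η (t + 1) x =
      (S (t + 1))ᶜ.indicator (η t) x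
        + (1 / (2 * (d : ℝ))) * ∑ i : Fin d,
            ((S (t + 1)).indicator (η t) (nbr x i 1)
              + (S (t + 1)).indicator (η t) (nbr x i (-1)))

namespace SplittingModel

variable {d : ℕ} {n h : ℝ}

/-- A valid splitting order: some unstable site splits whenever there is an unstable
site, and every site that is unstable at some time eventually splits. -/
def Valid (M : SplittingModel d n h) : Prop :=
  (∀ t, {x | 1 ≤ M.η t x}.Nonempty → (M.S (t + 1)).Nonempty) ∧
    (∀ t x, 1 ≤ M.η t x → ∃ t₀, 1 ≤ t₀ ∧ x ∈ M.S (t + t₀))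

/-- The parallel splitting order (the splitting automaton): at every time step,
every unstable site splits. -/
def Parallel (M : SplittingModel d n h) : Prop :=
  ∀ t, M.S (t + 1) = {x | 1 ≤ M.η t x}

/-- The set of sites that split at least once up to (and including) time `t`. -/
def Tt (M : SplittingModel d n h) (t : ℕ) : Set (Fin d → ℤ) :=
  ⋃ t' ∈ Set.Icc 1 t, M.S t'

/-- The set of sites that split at least once. -/
def T (M : SplittingModel d n h) : Set (Fin d → ℤ) :=
  ⋃ t, M.S t

/-- The model stabilizes: every site splits only finitely many times. -/
def Stabilizes (M : SplittingModel d n h) : Prop :=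
  ∀ x, {t | x ∈ M.S t}.Finite

/-- The total mass `u x` emitted from the site `x` during stabilization. -/
noncomputable def emit (M : SplittingModel d n h) (x : Fin d → ℤ) : ℝ :=
  ∑' t : ℕ, (M.S (t + 1)).indicator (M.η t) x

end SplittingModel

namespace SplittingModel

variable {d : ℕ} {n h : ℝ} (M : SplittingModel d n h)

/-- mass emitted from `x` at step `t+1`. -/
noncomputable def chip (t : ℕ) : (Fin d → ℤ) → ℝ :=
  Set.indicator (M.S (t + 1)) (M.η t)

lemma emit_eq_tsum_chip (x : Fin d → ℤ) : M.emit x = ∑' t, M.chip t x := rfl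

lemma chip_nonneg (t : ℕ) (x : Fin d → ℤ) : 0 ≤ M.chip t x := by
  unfold chip
  by_cases hx : x ∈ M.S (t + 1)
  · rw [Set.indicator_of_mem hx]
    exact le_trans zero_le_one (M.S_subset t hx)
  · rw [Set.indicator_of_notMem hx]

lemma chip_of_mem {t : ℕ} {x : Fin d → ℤ} (hx : x ∈ M.S (t + 1)) :
    M.chip t x = M.η t x := Set.indicator_of_mem hx _

lemma chip_of_not_mem {t : ℕ} {x : Fin d → ℤ} (hx : x ∉ M.S (t + 1)) :
    M.chip t x = 0 := Set.indicator_of_notMem hx _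

lemma evolve' (t : ℕ) (x : Fin d → ℤ) :
    M.η (t + 1) x = M.η t x - M.chip t x
      + (1 / (2 * (d : ℝ))) * ∑ i : Fin d, (M.chip t (nbr x i 1) + M.chip t (nbr x i (-1))) := by
  have h1 : (M.S (t + 1))ᶜ.indicator (M.η t) x = M.η t x - M.chip t x := by
    unfold chip
    by_cases hx : x ∈ M.S (t + 1)
    · rw [Set.indicator_of_notMem (by simpa using hx), Set.indicator_of_mem hx]; ring
    · rw [Set.indicator_of_mem (by simpa using hx), Set.indicator_of_notMem hx]; ring
  rw [M.evolve t x, h1]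
  rfl

lemma eta_ge_h (hh : h < 0) (hn : 1 ≤ n) : ∀ (t : ℕ) (x : Fin d → ℤ), h ≤ M.η t x := by
  intro t
  induction t with
  | zero =>
    intro x
    by_cases hx : x = 0
    · subst hx; rw [M.init_origin]; linarith
    · rw [M.init_other x hx]
  | succ t ih =>
    intro x
    rw [M.evolve' t x]
    have hsum : 0 ≤ (1 / (2 * (d : ℝ))) * ∑ i : Fin d, (M.chip t (nbr x i 1) + M.chip t (nbr x i (-1))) := by
      apply mul_nonneg (by positivity)
      exact Finset.sum_nonneg fun i _ => add_nonneg (M.chip_nonneg t _) (M.chip_nonneg t _)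
    by_cases hx : x ∈ M.S (t + 1)
    · rw [M.chip_of_mem hx]; linarith
    · rw [M.chip_of_not_mem hx]; have := ih x; linarith

/-- the box of radius `t`. -/
noncomputable def box (d t : ℕ) : Finset (Fin d → ℤ) :=
  Finset.Icc (fun _ => -(t : ℤ)) (fun _ => (t : ℤ))

lemma mem_box {d t : ℕ} {x : Fin d → ℤ} :
    x ∈ box d t ↔ ∀ i, -(t : ℤ) ≤ x i ∧ x i ≤ (t : ℤ) := by
  simp [box, Finset.mem_Icc, Pi.le_def, forall_and]

lemma box_mono {d : ℕ} {s t : ℕ} (hst : s ≤ t) : box d s ⊆ box d t := by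
  intro x hx
  rw [mem_box] at hx ⊢
  intro i
  have := hx i
  omega

lemma eta_eq_h_outside (hh : h < 0) : ∀ (t : ℕ) (x : Fin d → ℤ), x ∉ box d t → M.η t x = h := by
  intro t
  induction t with
  | zero =>
    intro x hx
    apply M.init_other
    intro h0
    apply hx
    rw [h0, mem_box]
    intro i; simp
  | succ t ih =>
    intro x hx
    have hxt : x ∉ box d t := fun hc => hx (box_mono (Nat.le_succ t) hc)
    have hxS : x ∉ M.S (t + 1) := by
      intro hc
      have := M.S_subset t hc
      have := ih x hxt
      simp only [Set.mem_setOf_eq] at *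
      linarith
    have hnbr : ∀ (i : Fin d) (ε : ℤ), (ε = 1 ∨ ε = -1) → M.chip t (nbr x i ε) = 0 := by
      intro i ε hε
      apply M.chip_of_not_mem
      intro hc
      have h1 : 1 ≤ M.η t (nbr x i ε) := M.S_subset t hc
      have h2 : nbr x i ε ∈ box d t := by
        by_contra hcc
        have := ih _ hcc
        linarith
      apply hx
      rw [mem_box] at h2 ⊢
      intro j
      have := h2 j
      by_cases hj : j = i
      · subst hj; rw [nbr_apply] at this; simp at this; push_cast
        rcases hε with hε | hε <;> omega
      · rw [nbr_apply] at this; simp [hj] at this; push_cast; omega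
    rw [M.evolve' t x, M.chip_of_not_mem hxS, ih x hxt]
    rw [Finset.sum_eq_zero fun i _ => by
      rw [hnbr i 1 (Or.inl rfl), hnbr i (-1) (Or.inr rfl)]; ring]
    ring

lemma chip_support {t : ℕ} {x : Fin d → ℤ} (hh : h < 0) (hx : M.chip t x ≠ 0) : x ∈ box d t := by
  by_contra hc
  apply hx
  apply M.chip_of_not_mem
  intro hS
  have := M.S_subset t hS
  have := M.eta_eq_h_outside hh t x hc
  simp only [Set.mem_setOf_eq] at *
  linarith

lemma sum_chip_eq_box (hh : h < 0) (t : ℕ) {B : Finset (Fin d → ℤ)} (hB : box d t ⊆ B) :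
    ∑ y ∈ B, M.chip t y = ∑ y ∈ box d t, M.chip t y := by
  symm
  apply Finset.sum_subset hB
  intro y _ hy
  by_contra hc
  exact hy (M.chip_support hh hc)

lemma sum_chip_shift (hh : h < 0) (t : ℕ) {A : Finset (Fin d → ℤ)}
    (hA : box d (t + 1) ⊆ A) (i : Fin d) {ε : ℤ} (hε : ε = 1 ∨ ε = -1) :
    ∑ x ∈ A, M.chip t (nbr x i ε) = ∑ x ∈ A, M.chip t x := by
  have hAt : box d t ⊆ A := (box_mono (Nat.le_succ t)).trans hA
  have himg : ∑ x ∈ A, M.chip t (nbr x i ε)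
      = ∑ y ∈ A.image (· + Pi.single i ε), M.chip t y := by
    rw [Finset.sum_image (fun a _ b _ hab => by simpa using hab)]
    exact Finset.sum_congr rfl fun x _ => by rw [nbr_eq_add]
  have hsub : box d t ⊆ A.image (· + Pi.single i ε) := by
    intro y hy
    rw [Finset.mem_image]
    refine ⟨y - Pi.single i ε, hA ?_, by simp⟩
    rw [mem_box] at hy ⊢
    intro j
    have := hy j
    by_cases hj : j = i
    · subst hj
      simp only [Pi.sub_apply, Pi.single_eq_same]
      rcases hε with hε | hε <;> (subst hε; push_cast; omega)
    · simp only [Pi.sub_apply, Pi.single_apply, if_neg hj, sub_zero]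
      push_cast; omega
  rw [himg, M.sum_chip_eq_box hh t hsub, M.sum_chip_eq_box hh t hAt]

lemma conservation (hd : 1 ≤ d) (hh : h < 0) :
    ∀ (t : ℕ) (A : Finset (Fin d → ℤ)), box d t ⊆ A →
      ∑ x ∈ A, (M.η t x - h) = n - h := by
  intro t
  induction t with
  | zero =>
    intro A hA
    have h0A : (0 : Fin d → ℤ) ∈ A := hA (by rw [mem_box]; intro i; simp)
    rw [Finset.sum_eq_single_of_mem 0 h0A]
    · rw [M.init_origin]
    · intro x _ hne; rw [M.init_other x hne]; ring
  | succ t ih =>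
    intro A hA
    have hAt : box d t ⊆ A := (box_mono (Nat.le_succ t)).trans hA
    have hx : ∀ x ∈ A, M.η (t + 1) x - h
        = (M.η t x - h) - M.chip t x
          + (1 / (2 * (d : ℝ))) * ∑ i : Fin d, (M.chip t (nbr x i 1) + M.chip t (nbr x i (-1))) := by
      intro x _
      rw [M.evolve' t x]; ring
    rw [Finset.sum_congr rfl hx, Finset.sum_add_distrib, Finset.sum_sub_distrib,
      ← Finset.mul_sum, Finset.sum_comm]
    have hinner : ∀ i : Fin d, ∑ x ∈ A, (M.chip t (nbr x i 1) + M.chip t (nbr x i (-1)))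
        = 2 * ∑ x ∈ A, M.chip t x := by
      intro i
      rw [Finset.sum_add_distrib, M.sum_chip_shift hh t hA i (Or.inl rfl),
        M.sum_chip_shift hh t hA i (Or.inr rfl)]
      ring
    rw [Finset.sum_congr rfl fun i _ => hinner i, Finset.sum_const, Finset.card_univ,
      Fintype.card_fin, nsmul_eq_mul, ih A hAt]
    have hd' : (d : ℝ) ≠ 0 := by positivity
    field_simp
    ring

lemma exists_no_split (hstab : M.Stabilizes) (x : Fin d → ℤ) :
    ∃ τ, ∀ s, τ ≤ s → x ∉ M.S s := by
  refine ⟨(hstab x).toFinset.sup id + 1, fun s hs hc => ?_⟩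
  have : s ∈ (hstab x).toFinset := by rwa [Set.Finite.mem_toFinset]
  have := Finset.le_sup (f := id) this
  simp only [id] at this
  omega

lemma eta_nonneg_of_T (hstab : M.Stabilizes) {x : Fin d → ℤ} (hx : x ∈ M.T) :
    ∃ τ, ∀ s, τ ≤ s → 0 ≤ M.η s x := by
  obtain ⟨t₁, ht₁⟩ := Set.mem_iUnion.mp hx
  have hne : ((hstab x).toFinset).Nonempty := ⟨t₁, by rwa [Set.Finite.mem_toFinset]⟩
  let τ₀ := (hstab x).toFinset.max' hne
  have hmemτ : x ∈ M.S τ₀ := by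
    have := (hstab x).toFinset.max'_mem hne
    rwa [Set.Finite.mem_toFinset] at this
  have hmax : ∀ s, x ∈ M.S s → s ≤ τ₀ := by
    intro s hs
    exact Finset.le_max' _ s (by rwa [Set.Finite.mem_toFinset])
  have hτpos : τ₀ ≠ 0 := by
    intro hc
    rw [hc, M.S_zero] at hmemτ
    exact hmemτ
  obtain ⟨s₀, hs₀⟩ := Nat.exists_eq_succ_of_ne_zero hτpos
  rw [hs₀] at hmemτ
  simp only [hs₀] at hmax
  have hnonneg : ∀ (s : ℕ) (y : Fin d → ℤ), 0 ≤ (1 / (2 * (d : ℝ)))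
      * ∑ i : Fin d, (M.chip s (nbr y i 1) + M.chip s (nbr y i (-1))) := by
    intro s y
    apply mul_nonneg (by positivity)
    exact Finset.sum_nonneg fun i _ => add_nonneg (M.chip_nonneg s _) (M.chip_nonneg s _)
  have hbase : 0 ≤ M.η (s₀ + 1) x := by
    rw [M.evolve' s₀ x, M.chip_of_mem hmemτ]
    have := hnonneg s₀ x
    linarith
  refine ⟨s₀ + 1, ?_⟩
  intro s hs
  induction s, hs using Nat.le_induction with
  | base => exact hbase
  | succ s hs ih =>
    have hxS : x ∉ M.S (s + 1) := by
      intro hc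
      have := hmax _ hc
      omega
    rw [M.evolve' s x, M.chip_of_not_mem hxS]
    have := hnonneg s x
    linarith

lemma exists_uniform_nonneg (hstab : M.Stabilizes) (A : Finset (Fin d → ℤ))
    (hA : ∀ x ∈ A, x ∈ M.T) :
    ∃ τ, ∀ x ∈ A, ∀ s, τ ≤ s → 0 ≤ M.η s x := by
  classical
  induction A using Finset.induction with
  | empty => exact ⟨0, by simp⟩
  | @insert a A _ ih =>
    obtain ⟨τ₁, hτ₁⟩ := M.eta_nonneg_of_T hstab (hA a (Finset.mem_insert_self a A))
    obtain ⟨τ₂, hτ₂⟩ := ih fun x hx => hA x (Finset.mem_insert_of_mem hx)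
    refine ⟨max τ₁ τ₂, ?_⟩
    intro x hx s hs
    rcases Finset.mem_insert.mp hx with rfl | hx
    · exact hτ₁ s (le_trans (le_max_left _ _) hs)
    · exact hτ₂ x hx s (le_trans (le_max_right _ _) hs)

lemma T_finite (hd : 1 ≤ d) (hh : h < 0) (hn : 1 ≤ n) (hstab : M.Stabilizes) :
    M.T.Finite := by
  by_contra hinf
  have hinf : M.T.Infinite := hinf
  set K := ⌈(n - h) / (-h)⌉₊ + 1 with hK
  obtain ⟨A, hAsub, hAcard⟩ := hinf.exists_subset_card_eq K
  obtain ⟨τ, hτ⟩ := M.exists_uniform_nonneg hstab A (fun x hx => hAsub hx)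
  have hcons := M.conservation hd hh τ (A ∪ box d τ) Finset.subset_union_right
  have hA_le : ∑ x ∈ A, (M.η τ x - h) ≤ n - h := by
    rw [← hcons]
    apply Finset.sum_le_sum_of_subset_of_nonneg Finset.subset_union_left
    intro x _ _
    have := M.eta_ge_h hh hn τ x
    linarith
  have hlower : (K : ℝ) * (-h) ≤ ∑ x ∈ A, (M.η τ x - h) := by
    have hterm : ∀ x ∈ A, -h ≤ M.η τ x - h := by
      intro x hx
      have := hτ x hx τ le_rfl
      linarith
    calc (K : ℝ) * (-h) = A.card • (-h) := by rw [hAcard, nsmul_eq_mul]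
    _ ≤ ∑ x ∈ A, (M.η τ x - h) := Finset.card_nsmul_le_sum A _ _ hterm
  have hceil : (n - h) / (-h) ≤ (⌈(n - h) / (-h)⌉₊ : ℝ) := Nat.le_ceil _
  have hdiv : n - h ≤ (⌈(n - h) / (-h)⌉₊ : ℝ) * (-h) :=
    (div_le_iff₀ (neg_pos.mpr hh)).mp hceil
  have hKval : (K : ℝ) = (⌈(n - h) / (-h)⌉₊ : ℝ) + 1 := by rw [hK]; push_cast; ring
  nlinarith

lemma emit_eq_sum {x : Fin d → ℤ} {t : ℕ} (hx : ∀ s, t ≤ s → x ∉ M.S (s + 1)) :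
    M.emit x = ∑ s ∈ Finset.range t, M.chip s x := by
  rw [emit_eq_tsum_chip]
  apply tsum_eq_sum
  intro b hb
  exact M.chip_of_not_mem (hx b (le_of_not_gt fun hlt => hb (Finset.mem_range.mpr hlt)))

lemma emit_nonneg (x : Fin d → ℤ) : 0 ≤ M.emit x :=
  tsum_nonneg fun t => M.chip_nonneg t x

lemma emit_of_not_T {x : Fin d → ℤ} (hx : x ∉ M.T) : M.emit x = 0 := by
  rw [emit_eq_tsum_chip]
  have : ∀ t, M.chip t x = 0 := by
    intro t
    apply M.chip_of_not_mem
    intro hc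
    exact hx (Set.mem_iUnion.mpr ⟨t + 1, hc⟩)
  simp [this]

lemma mem_T_of_emit_pos {x : Fin d → ℤ} (hx : 0 < M.emit x) : x ∈ M.T := by
  by_contra hc
  rw [M.emit_of_not_T hc] at hx
  exact lt_irrefl 0 hx

lemma one_le_emit_of_T (hstab : M.Stabilizes) {x : Fin d → ℤ} (hx : x ∈ M.T) :
    1 ≤ M.emit x := by
  obtain ⟨t₁, ht₁⟩ := Set.mem_iUnion.mp hx
  have ht₁0 : t₁ ≠ 0 := by
    intro hc
    rw [hc, M.S_zero] at ht₁
    exact ht₁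
  obtain ⟨s₁, rfl⟩ := Nat.exists_eq_succ_of_ne_zero ht₁0
  obtain ⟨τ, hτ⟩ := M.exists_no_split hstab x
  set t := max τ (s₁ + 1) with hts
  have hsum : M.emit x = ∑ s ∈ Finset.range t, M.chip s x :=
    M.emit_eq_sum fun s hs => hτ (s + 1) (by omega)
  rw [hsum]
  have hone : 1 ≤ M.chip s₁ x := by
    rw [M.chip_of_mem ht₁]
    exact M.S_subset s₁ ht₁
  calc (1 : ℝ) ≤ M.chip s₁ x := hone
  _ ≤ ∑ s ∈ Finset.range t, M.chip s x :=
      Finset.single_le_sum (fun s _ => M.chip_nonneg s x)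
        (Finset.mem_range.mpr (by omega))

lemma balance (t : ℕ) (x : Fin d → ℤ) :
    M.η t x = M.η 0 x
      + (1 / (2 * (d : ℝ))) * ∑ s ∈ Finset.range t,
          (∑ i : Fin d, (M.chip s (nbr x i 1) + M.chip s (nbr x i (-1))))
      - ∑ s ∈ Finset.range t, M.chip s x := by
  induction t with
  | zero => simp
  | succ t ih =>
    rw [M.evolve' t x, ih, Finset.sum_range_succ, Finset.sum_range_succ]
    ring

lemma key_ineq (hstab : M.Stabilizes) {x : Fin d → ℤ} (hxT : x ∈ M.T) (hx0 : x ≠ 0) :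
    0 ≤ h + (1 / (2 * (d : ℝ))) * ∑ i : Fin d, (M.emit (nbr x i 1) + M.emit (nbr x i (-1)))
      - M.emit x := by
  obtain ⟨τ₁, hτ₁⟩ := M.eta_nonneg_of_T hstab hxT
  obtain ⟨τ₂, hτ₂⟩ := M.exists_no_split hstab x
  have hn3 : ∀ p : Fin d × Bool, ∃ τ, ∀ s, τ ≤ s → nbr x p.1 (cond p.2 1 (-1)) ∉ M.S s :=
    fun p => M.exists_no_split hstab _
  choose τn hτn using hn3
  set t := max (max τ₁ τ₂) (Finset.univ.sup τn) with hts
  have hemx : M.emit x = ∑ s ∈ Finset.range t, M.chip s x :=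
    M.emit_eq_sum fun s hs => hτ₂ (s + 1) (by omega)
  have hemn : ∀ (i : Fin d) (b : Bool),
      M.emit (nbr x i (cond b 1 (-1))) = ∑ s ∈ Finset.range t, M.chip s (nbr x i (cond b 1 (-1))) := by
    intro i b
    apply M.emit_eq_sum
    intro s hs
    apply hτn (i, b) (s + 1)
    have := Finset.le_sup (f := τn) (Finset.mem_univ (i, b))
    omega
  have hpos : 0 ≤ M.η t x := hτ₁ t (by omega)
  have hb := M.balance t x
  rw [M.init_other x hx0] at hb
  have hswap : ∑ s ∈ Finset.range t, (∑ i : Fin d, (M.chip s (nbr x i 1) + M.chip s (nbr x i (-1))))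
      = ∑ i : Fin d, (M.emit (nbr x i 1) + M.emit (nbr x i (-1))) := by
    rw [Finset.sum_comm]
    apply Finset.sum_congr rfl
    intro i _
    rw [Finset.sum_add_distrib]
    rw [show M.emit (nbr x i 1) = ∑ s ∈ Finset.range t, M.chip s (nbr x i 1) from hemn i true]
    rw [show M.emit (nbr x i (-1)) = ∑ s ∈ Finset.range t, M.chip s (nbr x i (-1)) from hemn i false]
  rw [hswap] at hb
  rw [hemx]
  linarith


lemma step_lemma (hd : 1 ≤ d) (hh : h < 0) (hn : 1 ≤ n) (hstab : M.Stabilizes)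
    {x : Fin d → ℤ} (hxT : x ∈ M.T) (hx0 : x ≠ 0)
    (hnb : ∃ z, Adj x z ∧ M.emit z < M.emit x) :
    ∃ y, Adj x y ∧ (M.emit x - 2 * (d : ℝ) / (2 * (d : ℝ) - 1) * h < M.emit y)
      ∧ y ∈ M.T ∧ (∃ z, Adj y z ∧ M.emit z < M.emit y) := by
  classical
  obtain ⟨z, hzadj, hze⟩ := hnb
  obtain ⟨i₀, ε₀, hε₀, hzz⟩ := adj_iff_nbr hzadj
  set ν : Fin d × Bool → (Fin d → ℤ) := fun p => nbr x p.1 (cond p.2 1 (-1)) with hν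
  have hp₀ : ∃ p₀ : Fin d × Bool, ν p₀ = z := by
    rcases hε₀ with rfl | rfl
    · exact ⟨(i₀, true), hzz.symm⟩
    · exact ⟨(i₀, false), hzz.symm⟩
  obtain ⟨p₀, hp₀⟩ := hp₀
  have hne : (Finset.univ : Finset (Fin d × Bool)).Nonempty :=
    ⟨(⟨0, hd⟩, true), Finset.mem_univ _⟩
  obtain ⟨pm, -, hpm⟩ := Finset.exists_max_image Finset.univ (fun p => M.emit (ν p)) hne
  have hkey := M.key_ineq hstab hxT hx0
  have hsum2 : ∑ i : Fin d, (M.emit (nbr x i 1) + M.emit (nbr x i (-1)))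
      = ∑ p : Fin d × Bool, M.emit (ν p) := by
    rw [Fintype.sum_prod_type]
    apply Finset.sum_congr rfl
    intro i _
    rw [Fintype.sum_bool]
    simp [hν]
  rw [hsum2] at hkey
  have hsplit : ∑ p : Fin d × Bool, M.emit (ν p)
      = M.emit (ν p₀) + ∑ p ∈ Finset.univ.erase p₀, M.emit (ν p) :=
    (Finset.add_sum_erase _ _ (Finset.mem_univ p₀)).symm
  have hcard : (Finset.univ.erase p₀).card = 2 * d - 1 := by
    rw [Finset.card_erase_of_mem (Finset.mem_univ _), Finset.card_univ, Fintype.card_prod,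
      Fintype.card_fin, Fintype.card_bool]
    omega
  have hrest : ∑ p ∈ Finset.univ.erase p₀, M.emit (ν p)
      ≤ (2 * (d : ℝ) - 1) * M.emit (ν pm) := by
    have hle := Finset.sum_le_card_nsmul (Finset.univ.erase p₀) (fun p => M.emit (ν p))
      (M.emit (ν pm)) (fun p _ => hpm p (Finset.mem_univ p))
    rw [hcard, nsmul_eq_mul] at hle
    have hcast : ((2 * d - 1 : ℕ) : ℝ) = 2 * (d : ℝ) - 1 := by
      have h1 : 1 ≤ 2 * d := by omega
      push_cast [Nat.cast_sub h1]
      ring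
    rw [hcast] at hle
    exact hle
  have hD : (1 : ℝ) ≤ (d : ℝ) := by exact_mod_cast hd
  have h2D1 : (0 : ℝ) < 2 * (d : ℝ) - 1 := by linarith
  have h2D : (0 : ℝ) < 2 * (d : ℝ) := by linarith
  have hzu : M.emit (ν p₀) < M.emit x := by rw [hp₀]; exact hze
  have hkey2 : 2 * (d : ℝ) * (M.emit x - h) ≤ ∑ p : Fin d × Bool, M.emit (ν p) := by
    have h1 : M.emit x - h ≤ (1 / (2 * (d : ℝ))) * ∑ p : Fin d × Bool, M.emit (ν p) := by
      linarith
    calc 2 * (d : ℝ) * (M.emit x - h)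
        ≤ 2 * (d : ℝ) * ((1 / (2 * (d : ℝ))) * ∑ p : Fin d × Bool, M.emit (ν p)) := by
          apply mul_le_mul_of_nonneg_left h1 (le_of_lt h2D)
    _ = ∑ p : Fin d × Bool, M.emit (ν p) := by field_simp
  have hmain : (2 * (d : ℝ) - 1) * M.emit x - 2 * (d : ℝ) * h
      < (2 * (d : ℝ) - 1) * M.emit (ν pm) := by
    rw [hsplit] at hkey2
    nlinarith
  have hlt : M.emit x - 2 * (d : ℝ) / (2 * (d : ℝ) - 1) * h < M.emit (ν pm) := by
    have heq : M.emit x - 2 * (d : ℝ) / (2 * (d : ℝ) - 1) * h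
        = ((2 * (d : ℝ) - 1) * M.emit x - 2 * (d : ℝ) * h) / (2 * (d : ℝ) - 1) := by
      field_simp
    rw [heq, div_lt_iff₀ h2D1]
    linarith [hmain]
  have hadj : Adj x (ν pm) := by
    apply adj_nbr
    rcases pm with ⟨i, b⟩
    cases b
    · right; rfl
    · left; rfl
  have hq : 0 < 2 * (d : ℝ) / (2 * (d : ℝ) - 1) := by positivity
  have hpos : 0 < M.emit (ν pm) := by
    have hu0 : 0 ≤ M.emit x := M.emit_nonneg x
    nlinarith
  refine ⟨ν pm, hadj, hlt, M.mem_T_of_emit_pos hpos, x, adj_symm hadj, ?_⟩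
  nlinarith

end SplittingModel

/-- For the splitting model on `ℤ^d` with any valid splitting order, `h < 0`,
`n ≥ 1`, assuming the model stabilizes: from any site `x₀ ∈ T` having a neighbor
outside `T` there is a nearest-neighbor path `x₀ ∼ x₁ ∼ ⋯ ∼ x_m = 0` inside `T`
along which the emitted mass satisfies `u (x_{k+1}) > u (x_k) - (2d/(2d-1)) h`. -/
theorem increasing_path {d : ℕ} (hd : 1 ≤ d) {n h : ℝ} (hh : h < 0) (hn : 1 ≤ n)
    (M : SplittingModel d n h) (hM : M.Valid) (hstab : M.Stabilizes)
    (x₀ : Fin d → ℤ) (hx₀ : x₀ ∈ M.T) (hbd : ∃ y, Adj x₀ y ∧ y ∉ M.T) :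
    ∃ (m : ℕ) (p : ℕ → Fin d → ℤ), p 0 = x₀ ∧ p m = 0 ∧
      (∀ k ≤ m, p k ∈ M.T) ∧
      (∀ k < m, Adj (p k) (p (k + 1))) ∧
      (∀ k < m, M.emit (p k) - (2 * (d : ℝ)) / (2 * (d : ℝ) - 1) * h < M.emit (p (k + 1))) := by
  classical
  have hD : (1 : ℝ) ≤ (d : ℝ) := by exact_mod_cast hd
  have hq : 0 < 2 * (d : ℝ) / (2 * (d : ℝ) - 1) := by
    apply div_pos <;> linarith
  have hcpos : 0 < -(2 * (d : ℝ) / (2 * (d : ℝ) - 1) * h) := by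
    have := mul_pos hq (neg_pos.mpr hh)
    linarith [mul_pos hq (neg_pos.mpr hh)]
  set I : (Fin d → ℤ) → Prop := fun x => x ∈ M.T ∧ ∃ z, Adj x z ∧ M.emit z < M.emit x with hI
  have hstep : ∀ x : Fin d → ℤ, ∃ y : Fin d → ℤ,
      ((I x ∧ x ≠ 0) →
        (Adj x y ∧ M.emit x - 2 * (d : ℝ) / (2 * (d : ℝ) - 1) * h < M.emit y ∧ I y))
      ∧ (¬(I x ∧ x ≠ 0) → y = x) := by
    intro x
    by_cases hx : I x ∧ x ≠ 0
    · obtain ⟨y, h1, h2, h3, h4⟩ := M.step_lemma hd hh hn hstab hx.1.1 hx.2 hx.1.2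
      exact ⟨y, fun _ => ⟨h1, h2, h3, h4⟩, fun hc => absurd hx hc⟩
    · exact ⟨x, fun hc => absurd hc hx, fun _ => rfl⟩
  choose f hf hfid using hstep
  set p : ℕ → Fin d → ℤ := fun k => f^[k] x₀ with hp
  have hp0 : p 0 = x₀ := rfl
  have hpsucc : ∀ k, p (k + 1) = f (p k) := fun k => Function.iterate_succ_apply' f k x₀
  have hI0 : I x₀ := by
    obtain ⟨y, hy, hyT⟩ := hbd
    refine ⟨hx₀, y, hy, ?_⟩
    rw [M.emit_of_not_T hyT]
    exact lt_of_lt_of_le zero_lt_one (M.one_le_emit_of_T hstab hx₀)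
  have hIall : ∀ k, I (p k) := by
    intro k
    induction k with
    | zero => exact hI0
    | succ k ih =>
      by_cases hk : p k ≠ 0
      · rw [hpsucc k]
        exact (hf (p k) ⟨ih, hk⟩).2.2
      · push_neg at hk
        rw [hpsucc k, hfid (p k) (by simp [hk])]
        exact ih
  have hgrow : ∀ k, (∀ j < k, p j ≠ 0) →
      M.emit x₀ + (k : ℝ) * (-(2 * (d : ℝ) / (2 * (d : ℝ) - 1) * h)) ≤ M.emit (p k) := by
    intro k
    induction k with
    | zero => simp [hp0]
    | succ k ih =>
      intro hne
      have hk : p k ≠ 0 := hne k (Nat.lt_succ_self k)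
      have hprev := ih fun j hj => hne j (Nat.lt_succ_of_lt hj)
      have hstepk := (hf (p k) ⟨hIall k, hk⟩).2.1
      rw [hpsucc k]
      push_cast
      linarith
  have hTfin := M.T_finite hd hh hn hstab
  have hbound : ∃ B : ℝ, ∀ z ∈ M.T, M.emit z ≤ B := by
    refine ⟨(hTfin.toFinset.image M.emit).max' ⟨M.emit x₀,
      Finset.mem_image_of_mem M.emit (hTfin.mem_toFinset.mpr hx₀)⟩, ?_⟩
    intro z hz
    exact Finset.le_max' _ _ (Finset.mem_image_of_mem M.emit (hTfin.mem_toFinset.mpr hz))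
  obtain ⟨B, hB⟩ := hbound
  obtain ⟨N, hN⟩ := exists_nat_gt ((B - M.emit x₀) / (-(2 * (d : ℝ) / (2 * (d : ℝ) - 1) * h)))
  have hex : ∃ k, p k = 0 := by
    by_contra hc
    push_neg at hc
    have h1 := hgrow N fun j _ => hc j
    have h2 := hB (p N) (hIall N).1
    have h3 : B - M.emit x₀ < (N : ℝ) * (-(2 * (d : ℝ) / (2 * (d : ℝ) - 1) * h)) :=
      (div_lt_iff₀ hcpos).mp hN
    linarith
  refine ⟨Nat.find hex, p, hp0, Nat.find_spec hex, ?_, ?_, ?_⟩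
  · intro k _
    exact (hIall k).1
  · intro k hk
    have hk0 : p k ≠ 0 := Nat.find_min hex hk
    rw [hpsucc k]
    exact (hf (p k) ⟨hIall k, hk0⟩).1
  · intro k hk
    have hk0 : p k ≠ 0 := Nat.find_min hex hk
    rw [hpsucc k]
    exact (hf (p k) ⟨hIall k, hk0⟩).2.1
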